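/- In the same instance, the pay-halfway contract that pays ((p−q)/(1−q))·c at state s2 and c on outcome 2 (and 0 elsewhere) incentivizes the optimal action profile (a2, productive final actions) with total expected payment (1+p−q)c. Consequently, as p → 1 with q fixed, the ratio of the minimal standard-contract payment (at least (1−q)c/(1−p)) to the pay-halfway payment (1+p−q)c tends to infinity; i.e., for every K there exist valid parameters p, q, c, x for which the ratio exceeds K. -/

import Mathlib

/-- Profile: (initial action is a2?, productive final at s1?, productive final at s2?). -/
abbrev Profile8 : Type := Bool × Bool × Bool

/-- Agent's expected utility under the pay-halfway contract paying `((p−q)/(1−q))·c` at state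
`s2` and `c` on the reward-`x` outcome (0 elsewhere), in the instance where `a1` (cost 0) goes
to `s1` w.p. `p` and `s3` w.p. `1−p`, and `a2` (cost 0) goes to `s1` w.p. `q` and `s2` w.p.
`1−q`; at `s1` the productive final action is free and yields the reward outcome surely; at
`s2` it costs `c` and yields the reward outcome surely, the null action yields the zero
outcome; `s3` yields only the zero outcome. -/
noncomputable def agentUPay8 (p q c : ℝ) (a : Profile8) : ℝ :=
  if a.1 then
    q * (if a.2.1 then c else 0)
      + (1 - q) * ((if a.2.2 then c - c else 0) + (p - q) / (1 - q) * c)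
  else
    p * (if a.2.1 then c else 0)

/-- The pay-halfway contract paying `((p−q)/(1−q))·c` at `s2` and `c` on the reward outcome
incentivizes the optimal profile `(a2, productive finals)` with total expected payment
`(1+p−q)c`; and the ratio of the minimal standard-contract payment `(1−q)c/(1−p)` to this
pay-halfway payment is unbounded over valid parameters. -/
theorem pay_halfway_payment_ratio_unbounded
    (p q c x : ℝ) (hq : 0 < q) (hqp : q < p) (hp : p < 1) (hc : 0 < c)
    (hx : x > (1 + p - q) * c / (1 - p)) :
    (∀ a : Profile8, agentUPay8 p q c a ≤ agentUPay8 p q c (true, true, true)) ∧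
    (q * c + (1 - q) * ((p - q) / (1 - q) * c + c) = (1 + p - q) * c) ∧
    (∀ K : ℝ, ∃ p' q' c' x' : ℝ,
      0 < q' ∧ q' < p' ∧ p' < 1 ∧ 0 < c' ∧
      x' > (1 + p' - q') * c' / (1 - p') ∧
      ((1 - q') * c' / (1 - p')) / ((1 + p' - q') * c') > K) := by
  have h1q : (1:ℝ) - q ≠ 0 := by linarith
  refine ⟨?_, ?_, ?_⟩
  · rintro ⟨b1, b2, b3⟩
    have key : agentUPay8 p q c (true, true, true) = p * c := by
      simp only [agentUPay8]
      field_simp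
      simp only [if_true]
      ring
    rw [key]
    cases b1 <;> cases b2 <;> cases b3 <;> simp only [agentUPay8] <;> simp <;>
      (try field_simp) <;> nlinarith [mul_pos hq hc, mul_pos (sub_pos.2 hqp) hc]
  · field_simp
    ring
  · intro K
    set δ : ℝ := 1 / (6 * (|K| + 1)) with hδdef
    have hKpos : (0:ℝ) < |K| + 1 := by positivity
    have hδpos : 0 < δ := by positivity
    have hδle : δ ≤ 1/6 := by
      rw [hδdef]
      rw [div_le_div_iff₀ (by positivity) (by norm_num)]
      nlinarith [abs_nonneg K]
    refine ⟨1 - δ, 1/2, 1, (1 + (1 - δ) - 1/2) * 1 / (1 - (1 - δ)) + 1,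
      by norm_num, by linarith, by linarith, one_pos, by linarith, ?_⟩
    have h1 : 1 - (1 - δ) = δ := by ring
    rw [h1]
    have hden : 0 < (1 + (1 - δ) - 1/2) * 1 := by nlinarith
    rw [gt_iff_lt, lt_div_iff₀ hden]
    have h2 : (1 + (1 - δ) - 1/2) * 1 ≤ 3/2 := by nlinarith
    have h3 : K * ((1 + (1 - δ) - 1/2) * 1) ≤ |K| * (3/2) := by
      calc K * ((1 + (1 - δ) - 1/2) * 1) ≤ |K| * ((1 + (1 - δ) - 1/2) * 1) := by
            nlinarith [le_abs_self K]
        _ ≤ |K| * (3/2) := by nlinarith [abs_nonneg K]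
    have hmul : δ * (6 * (|K| + 1)) = 1 := by
      rw [hδdef]; field_simp
    have h4 : |K| * (3/2) < (1 - 1/2) * 1 / δ := by
      rw [lt_div_iff₀ hδpos]
      nlinarith [abs_nonneg K, hδpos]
    linarith
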